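/- arXiv:2402.05806 — 7 statements merged into one kernel-verified Lean document; each statement's English description precedes it below -/
import Mathlib

section
/- Let $\mathbf{z} \in \mathbb{R}^C$ with $z_1 \geq z_2 \geq \dots \geq z_C$, let $L \in \{1,\dots,C\}$, and for $T>0$ define the softmax $\sigma_i(\mathbf{z}/T) = \exp(z_i/T)/\sum_{j=1}^C \exp(z_j/T)$. If $T > \tilde T > 0$, then $\sum_{j=1}^L \sigma_j(\mathbf{z}/\tilde T) \geq \sum_{j=1}^L \sigma_j(\mathbf{z}/T)$. -/
noncomputable def softmax {C : ℕ} (z : Fin C → ℝ) (T : ℝ) (i : Fin C) : ℝ :=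
  Real.exp (z i / T) / ∑ j, Real.exp (z j / T)

noncomputable def topSum {C : ℕ} (z : Fin C → ℝ) (T : ℝ) (L : ℕ) : ℝ :=
  ∑ i ∈ Finset.univ.filter (fun i : Fin C => (i : ℕ) < L), softmax z T i

theorem stmt_1 {C : ℕ} (z : Fin C → ℝ) (hz : ∀ i j : Fin C, i ≤ j → z j ≤ z i)
    (L : ℕ) (hL1 : 1 ≤ L) (hLC : L ≤ C) (T T' : ℝ) (hTT : T > T') (hT' : T' > 0) :
    topSum z T' L ≥ topSum z T L := by
  have hT0 : (0:ℝ) < T := lt_trans hT' hTT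
  have hC : 0 < C := lt_of_lt_of_le hL1 hLC
  haveI : Nonempty (Fin C) := Fin.pos_iff_nonempty.mp hC
  set S := Finset.univ.filter (fun i : Fin C => (i : ℕ) < L) with hS
  set Sc := Finset.univ.filter (fun i : Fin C => ¬ (i : ℕ) < L) with hSc
  have hsum : ∀ (t : ℝ), topSum z t L =
      (∑ i ∈ S, Real.exp (z i / t)) / ∑ j, Real.exp (z j / t) := by
    intro t; unfold topSum softmax; rw [Finset.sum_div]
  have hden : ∀ t : ℝ, (0:ℝ) < ∑ j, Real.exp (z j / t) := by
    intro t
    exact Finset.sum_pos (fun j _ => Real.exp_pos _) Finset.univ_nonempty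
  have hsplit : ∀ t : ℝ, (∑ j, Real.exp (z j / t)) =
      (∑ i ∈ S, Real.exp (z i / t)) + (∑ i ∈ Sc, Real.exp (z i / t)) :=
    fun t => (Finset.sum_filter_add_sum_filter_not _ _ _).symm
  -- key termwise inequality
  have key : (∑ i ∈ S, Real.exp (z i / T)) * (∑ j ∈ Sc, Real.exp (z j / T')) ≤
      (∑ i ∈ S, Real.exp (z i / T')) * (∑ j ∈ Sc, Real.exp (z j / T)) := by
    rw [Finset.sum_mul_sum, Finset.sum_mul_sum]
    apply Finset.sum_le_sum
    intro i hi
    apply Finset.sum_le_sum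
    intro j hj
    have hiL : (i : ℕ) < L := (Finset.mem_filter.mp hi).2
    have hjL : ¬ (j : ℕ) < L := (Finset.mem_filter.mp hj).2
    have hij : i ≤ j := by
      have : (i : ℕ) ≤ (j : ℕ) := le_trans hiL.le (le_of_not_gt hjL)
      exact this
    have hzij : z j ≤ z i := hz i j hij
    rw [← Real.exp_add, ← Real.exp_add, Real.exp_le_exp]
    rw [div_add_div _ _ hT0.ne' hT'.ne', div_add_div _ _ hT'.ne' hT0.ne',
      div_le_div_iff₀ (by positivity) (by positivity)]
    nlinarith [mul_nonneg (mul_pos hT0 hT').le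
      (mul_nonneg (sub_nonneg.2 hzij) (sub_nonneg.2 hTT.le))]
  rw [ge_iff_le, hsum, hsum, div_le_div_iff₀ (hden T) (hden T'), hsplit T, hsplit T']
  nlinarith [key]
end

section
/- Let $\mathbf{z} \in \mathbb{R}^C$ with $z_1 \geq \dots \geq z_C$, $L \in \{1,\dots,C\}$, and $T > \tilde T > 0$. If $L < C$ and not all entries of $\mathbf{z}$ are equal, then $\sum_{j=1}^L \sigma_j(\mathbf{z}/\tilde T) > \sum_{j=1}^L \sigma_j(\mathbf{z}/T)$ (the inequality is strict). -/
theorem stmt_2 {C : ℕ} (z : Fin C → ℝ) (hz : ∀ i j : Fin C, i ≤ j → z j ≤ z i)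
    (L : ℕ) (hL1 : 1 ≤ L) (hLC : L < C) (hne : ∃ i j : Fin C, z i ≠ z j)
    (T T' : ℝ) (hTT : T > T') (hT' : T' > 0) :
    topSum z T' L > topSum z T L := by
  classical
  have hT : (0:ℝ) < T := hT'.trans hTT
  have hC0 : 0 < C := lt_of_le_of_lt (Nat.zero_le L) hLC
  set P := Finset.univ.filter (fun i : Fin C => (i : ℕ) < L) with hPdef
  set Q := Finset.univ.filter (fun i : Fin C => ¬ (i : ℕ) < L) with hQdef
  have hPmem : (⟨0, hC0⟩ : Fin C) ∈ P := by simp [hPdef]; omega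
  have hQmem : (⟨L, hLC⟩ : Fin C) ∈ Q := by simp [hQdef]
  set A := fun S : ℝ => ∑ i ∈ P, Real.exp (z i / S) with hAdef
  set B := fun S : ℝ => ∑ i ∈ Q, Real.exp (z i / S) with hBdef
  have hApos : ∀ S : ℝ, 0 < A S := fun S =>
    Finset.sum_pos (fun i _ => Real.exp_pos _) ⟨_, hPmem⟩
  have hBpos : ∀ S : ℝ, 0 < B S := fun S =>
    Finset.sum_pos (fun i _ => Real.exp_pos _) ⟨_, hQmem⟩
  have htop : ∀ S : ℝ, topSum z S L = A S / (A S + B S) := by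
    intro S
    unfold topSum softmax
    rw [← Finset.sum_div]
    congr 1
    rw [← Finset.sum_filter_add_sum_filter_not Finset.univ
      (fun i : Fin C => (i : ℕ) < L) (fun i => Real.exp (z i / S))]
  -- inverse temperature comparison
  have hinv : T⁻¹ < T'⁻¹ := by
    rw [inv_lt_inv₀ hT hT']
    exact hTT
  -- existence of a strict pair
  have hpair : ∃ i ∈ P, ∃ j ∈ Q, z j < z i := by
    by_contra h
    push_neg at h
    obtain ⟨a, b, hab⟩ := hne
    apply hab
    have hall : ∀ k : Fin C, z k = z ⟨L, hLC⟩ := by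
      intro k
      by_cases hk : (k : ℕ) < L
      · have h1 : z ⟨L, hLC⟩ ≤ z k := hz k ⟨L, hLC⟩ (by rw [Fin.le_def]; exact Nat.le_of_lt hk)
        have h2 : z k ≤ z ⟨L, hLC⟩ := h k (by simp [hPdef, hk]) _ hQmem
        linarith
      · have h2 : z ⟨0, hC0⟩ ≤ z k := h _ hPmem k (by simpa [hQdef] using Nat.le_of_not_lt hk)
        have h3 : z k ≤ z ⟨L, hLC⟩ := hz ⟨L, hLC⟩ k (by rw [Fin.le_def]; exact Nat.le_of_not_lt hk)
        have h4 : z ⟨L, hLC⟩ ≤ z ⟨0, hC0⟩ := hz _ _ (by simp [Fin.le_def])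
        linarith
    rw [hall a, hall b]
  obtain ⟨i₀, hi₀, j₀, hj₀, hstrict⟩ := hpair
  -- key cross inequality
  have key : A T * B T' < A T' * B T := by
    rw [hAdef, hBdef]
    simp only
    rw [Finset.sum_mul_sum, Finset.sum_mul_sum, ← Finset.sum_product', ← Finset.sum_product']
    apply Finset.sum_lt_sum
    · rintro ⟨i, j⟩ hij
      rw [Finset.mem_product] at hij
      have hij2 : z j ≤ z i := by
        apply hz
        have h1 := hij.1; have h2 := hij.2
        rw [hPdef, Finset.mem_filter] at h1
        rw [hQdef, Finset.mem_filter] at h2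
        rw [Fin.le_def]; exact Nat.le_of_lt (Nat.lt_of_lt_of_le h1.2 (Nat.le_of_not_lt h2.2))
      rw [← Real.exp_add, ← Real.exp_add, Real.exp_le_exp, div_eq_mul_inv,
        div_eq_mul_inv, div_eq_mul_inv, div_eq_mul_inv]
      nlinarith [mul_nonneg (sub_nonneg.2 hij2) (sub_nonneg.2 hinv.le)]
    · refine ⟨(i₀, j₀), Finset.mem_product.2 ⟨hi₀, hj₀⟩, ?_⟩
      rw [← Real.exp_add, ← Real.exp_add, Real.exp_lt_exp, div_eq_mul_inv,
        div_eq_mul_inv, div_eq_mul_inv, div_eq_mul_inv]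
      nlinarith [mul_pos (sub_pos.2 hstrict) (sub_pos.2 hinv)]
  rw [htop, htop, gt_iff_lt, div_lt_div_iff₀ (by have := hApos T; have := hBpos T; linarith) (by have := hApos T'; have := hBpos T'; linarith)]
  nlinarith [key]
end

section
/- For any $\mathbf{z} \in \mathbb{R}^C$ not proportional to the all-ones vector, the Shannon entropy $H(\sigma(\mathbf{z}/T)) = -\sum_{i=1}^C \sigma_i(\mathbf{z}/T)\ln \sigma_i(\mathbf{z}/T)$ is strictly monotonically increasing as a function of $T > 0$. -/
noncomputable def entropy {C : ℕ} (p : Fin C → ℝ) : ℝ :=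
  -∑ i, p i * Real.log (p i)

noncomputable def Zf {C : ℕ} (z : Fin C → ℝ) (β : ℝ) : ℝ := ∑ j, Real.exp (β * z j)
noncomputable def Z1f {C : ℕ} (z : Fin C → ℝ) (β : ℝ) : ℝ := ∑ j, z j * Real.exp (β * z j)
noncomputable def Z2f {C : ℕ} (z : Fin C → ℝ) (β : ℝ) : ℝ := ∑ j, (z j)^2 * Real.exp (β * z j)
noncomputable def Ff {C : ℕ} (z : Fin C → ℝ) (β : ℝ) : ℝ :=
  Real.log (Zf z β) - β * (Z1f z β / Zf z β)

lemma Zf_pos {C : ℕ} [NeZero C] (z : Fin C → ℝ) (β : ℝ) : 0 < Zf z β :=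
  Finset.sum_pos (fun j _ => Real.exp_pos _) (by simp [Finset.univ_nonempty])

lemma hasDerivAt_Zf {C : ℕ} (z : Fin C → ℝ) (β : ℝ) :
    HasDerivAt (Zf z) (Z1f z β) β := by
  have : HasDerivAt (Zf z) (∑ j, Real.exp (β * z j) * z j) β := by
    apply HasDerivAt.fun_sum
    intro j _
    have h := ((hasDerivAt_id β).mul_const (z j)).exp
    simpa using h
  simpa [Z1f, mul_comm] using this

lemma hasDerivAt_Z1f {C : ℕ} (z : Fin C → ℝ) (β : ℝ) :
    HasDerivAt (Z1f z) (Z2f z β) β := by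
  have h : HasDerivAt (Z1f z) (∑ j, z j * (Real.exp (β * z j) * z j)) β := by
    apply HasDerivAt.fun_sum
    intro j _
    have h := (((hasDerivAt_id β).mul_const (z j)).exp).const_mul (z j)
    simpa using h
  have he : Z2f z β = ∑ j, z j * (Real.exp (β * z j) * z j) :=
    Finset.sum_congr rfl (fun j _ => by ring)
  rw [he]
  exact h

lemma var_pos {C : ℕ} [NeZero C] (z : Fin C → ℝ) (hne : ¬ ∃ c : ℝ, ∀ i, z i = c) (β : ℝ) :
    0 < Z2f z β * Zf z β - Z1f z β * Z1f z β := by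
  push_neg at hne
  have hZ := Zf_pos z β
  set m : ℝ := Z1f z β / Zf z β with hm
  obtain ⟨i0, hi0⟩ := hne m
  have key : 0 < ∑ j, (z j - m)^2 * Real.exp (β * z j) := by
    apply Finset.sum_pos'
    · intro j _; positivity
    · exact ⟨i0, Finset.mem_univ _, by
        have : (z i0 - m) ≠ 0 := sub_ne_zero.mpr hi0
        positivity⟩
  have expand : ∑ j, (z j - m)^2 * Real.exp (β * z j)
      = Z2f z β - 2*m*Z1f z β + m^2 * Zf z β := by
    have h : ∀ j, (z j - m)^2 * Real.exp (β * z j)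
        = (z j)^2 * Real.exp (β * z j) - 2*m*(z j * Real.exp (β * z j))
          + m^2 * Real.exp (β * z j) := fun j => by ring
    rw [Finset.sum_congr rfl (fun j _ => h j)]
    simp [Finset.sum_add_distrib, Finset.sum_sub_distrib, Z2f, Z1f, Zf, Finset.mul_sum]
  rw [expand] at key
  have hZne : Zf z β ≠ 0 := ne_of_gt hZ
  have heq : Z2f z β * Zf z β - Z1f z β * Z1f z β
      = Zf z β * (Z2f z β - 2*m*Z1f z β + m^2 * Zf z β) := by
    rw [hm]
    field_simp
    ring
  rw [heq]
  positivity

lemma hasDerivAt_Ff {C : ℕ} [NeZero C] (z : Fin C → ℝ) (β : ℝ) :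
    HasDerivAt (Ff z)
      (-(β * ((Z2f z β * Zf z β - Z1f z β * Z1f z β) / (Zf z β)^2))) β := by
  have hZne : Zf z β ≠ 0 := ne_of_gt (Zf_pos z β)
  have h1 : HasDerivAt (fun b => Real.log (Zf z b)) (Z1f z β / Zf z β) β :=
    (hasDerivAt_Zf z β).log hZne
  have h2 : HasDerivAt (fun b => Z1f z b / Zf z b)
      ((Z2f z β * Zf z β - Z1f z β * Z1f z β) / (Zf z β)^2) β :=
    (hasDerivAt_Z1f z β).div (hasDerivAt_Zf z β) hZne
  have h3 := (hasDerivAt_id β).mul h2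
  have h4 := h1.sub h3
  refine h4.congr_deriv ?_
  simp only [id_eq]
  ring

lemma entropy_eq {C : ℕ} [NeZero C] (z : Fin C → ℝ) {T : ℝ} (hT : 0 < T) :
    entropy (softmax z T) = Ff z (1/T) := by
  have hZ := Zf_pos z (1/T)
  have hZne : Zf z (1/T) ≠ 0 := ne_of_gt hZ
  have hTne : T ≠ 0 := ne_of_gt hT
  have hdiv : ∀ i : Fin C, z i / T = (1/T) * z i := fun i => by field_simp
  have hsm : ∀ i : Fin C, softmax z T i = Real.exp ((1/T) * z i) / Zf z (1/T) := by
    intro i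
    simp only [softmax, Zf, hdiv]
  have hlog : ∀ i : Fin C, Real.log (softmax z T i)
      = (1/T) * z i - Real.log (Zf z (1/T)) := by
    intro i
    rw [hsm i, Real.log_div (Real.exp_ne_zero _) hZne, Real.log_exp]
  unfold entropy
  rw [Finset.sum_congr rfl (fun i _ => by rw [hlog i, hsm i])]
  have hsum : ∑ i : Fin C, Real.exp ((1/T) * z i) / Zf z (1/T) * ((1/T) * z i - Real.log (Zf z (1/T)))
      = (1/T) * Z1f z (1/T) / Zf z (1/T) - Real.log (Zf z (1/T)) := by
    have h1 : ∑ i : Fin C, Real.exp ((1/T) * z i) / Zf z (1/T) * ((1/T) * z i - Real.log (Zf z (1/T)))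
        = (∑ i : Fin C, ((1/T) * (z i * Real.exp ((1/T) * z i))
            - Real.log (Zf z (1/T)) * Real.exp ((1/T) * z i))) / Zf z (1/T) := by
      rw [Finset.sum_div]
      refine Finset.sum_congr rfl fun i _ => ?_
      field_simp
    rw [h1, Finset.sum_sub_distrib, ← Finset.mul_sum, ← Finset.mul_sum]
    have e1 : (∑ i : Fin C, z i * Real.exp ((1/T) * z i)) = Z1f z (1/T) := rfl
    have e2 : (∑ i : Fin C, Real.exp ((1/T) * z i)) = Zf z (1/T) := rfl
    rw [e1, e2]
    field_simp
  rw [hsum, Ff]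
  ring

theorem stmt_5 {C : ℕ} (z : Fin C → ℝ) (hne : ¬ ∃ c : ℝ, ∀ i, z i = c) :
    StrictMonoOn (fun T => entropy (softmax z T)) (Set.Ioi (0 : ℝ)) := by
  have hC : C ≠ 0 := by
    rintro rfl
    exact hne ⟨0, fun i => i.elim0⟩
  have : NeZero C := ⟨hC⟩
  have hanti : StrictAntiOn (Ff z) (Set.Ioi (0:ℝ)) := by
    apply strictAntiOn_of_deriv_neg (convex_Ioi 0)
    · exact fun x _ => (hasDerivAt_Ff z x).continuousAt.continuousWithinAt
    · intro x hx
      rw [interior_Ioi] at hx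
      rw [(hasDerivAt_Ff z x).deriv]
      have hv := var_pos z hne x
      have hx' : (0:ℝ) < x := hx
      have hZ := Zf_pos z x
      have hpos : 0 < x * ((Z2f z x * Zf z x - Z1f z x * Z1f z x) / (Zf z x)^2) := by
        positivity
      linarith
  intro T1 h1 T2 h2 hlt
  simp only [Set.mem_Ioi] at h1 h2
  have hb1 : (1:ℝ)/T2 < 1/T1 := one_div_lt_one_div_of_lt h1 hlt
  have hm1 : (1:ℝ)/T1 ∈ Set.Ioi (0:ℝ) := by simp [h1]
  have hm2 : (1:ℝ)/T2 ∈ Set.Ioi (0:ℝ) := by simp [h2]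
  calc entropy (softmax z T1) = Ff z (1/T1) := entropy_eq z h1
    _ < Ff z (1/T2) := hanti hm2 hm1 hb1
    _ = entropy (softmax z T2) := (entropy_eq z h2).symm
end

section
/- Let $\mathbf{z}\in\mathbb{R}^C$ with $z_1 \geq \dots \geq z_C$, $\Delta z = z_1 - z_2$, $T > 1$, and $M \in \{1,\dots,C-1\}$. If $\Delta z > \max\left\{\frac{T}{T-1}\ln(4T), \frac{T}{T+1}\ln(4T(C-1)^2)\right\}$, then $\frac{\partial}{\partial z_1} g(\mathbf{z};T,M) < 0$, where $g(\mathbf{z};T,M) = \frac{\sum_{i=1}^M e^{z_i}}{\sum_{j=1}^C e^{z_j}} - \frac{\sum_{i=1}^M e^{z_i/T}}{\sum_{j=1}^C e^{z_j/T}}$. -/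
noncomputable def gap {C : ℕ} (z : Fin C → ℝ) (T : ℝ) (M : ℕ) : ℝ :=
  (∑ i ∈ Finset.univ.filter (fun i : Fin C => (i : ℕ) < M), Real.exp (z i)) /
      (∑ j, Real.exp (z j)) -
    (∑ i ∈ Finset.univ.filter (fun i : Fin C => (i : ℕ) < M), Real.exp (z i / T)) /
      (∑ j, Real.exp (z j / T))

set_option maxHeartbeats 1000000 in
theorem stmt_9 {C : ℕ} (hC : 2 ≤ C) (z : Fin C → ℝ)
    (hz : ∀ i j : Fin C, i ≤ j → z j ≤ z i)
    (T : ℝ) (hT : 1 < T) (M : ℕ) (hM1 : 1 ≤ M) (hM : M ≤ C - 1)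
    (hΔ : z ⟨0, by omega⟩ - z ⟨1, by omega⟩ >
      max (T / (T - 1) * Real.log (4 * T))
        (T / (T + 1) * Real.log (4 * T * ((C : ℝ) - 1) ^ 2))) :
    deriv (fun x => gap (Function.update z ⟨0, by omega⟩ x) T M) (z ⟨0, by omega⟩) < 0 := by
  have hC0 : 0 < C := by omega
  have hC1 : 1 < C := by omega
  set i0 : Fin C := ⟨0, hC0⟩ with hi0def
  set i1 : Fin C := ⟨1, hC1⟩ with hi1def
  set x0 : ℝ := z i0 with hx0def
  set z1 : ℝ := z i1 with hz1def
  set Δ : ℝ := x0 - z1 with hΔdef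
  have hT0 : (0:ℝ) < T := by linarith
  have hT1 : (0:ℝ) < T - 1 := by linarith
  have hTne : T ≠ 0 := ne_of_gt hT0
  have hCR : (1:ℝ) ≤ (C:ℝ) - 1 := by
    have : (2:ℝ) ≤ (C:ℝ) := by exact_mod_cast hC
    linarith
  have hΔ' : max (T / (T - 1) * Real.log (4 * T))
      (T / (T + 1) * Real.log (4 * T * ((C : ℝ) - 1) ^ 2)) < Δ := hΔ
  have hmax1 : T / (T - 1) * Real.log (4 * T) < Δ :=
    lt_of_le_of_lt (le_max_left _ _) hΔ'
  have hmax2 : T / (T + 1) * Real.log (4 * T * ((C : ℝ) - 1) ^ 2) < Δ :=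
    lt_of_le_of_lt (le_max_right _ _) hΔ'
  have hlog1 : 0 < Real.log (4 * T) := Real.log_pos (by linarith)
  have hΔpos : 0 < Δ := lt_trans (by positivity) hmax1
  -- the finsets
  set topF : Finset (Fin C) := Finset.univ.filter (fun i : Fin C => (i : ℕ) < M) with htopF
  set K : Finset (Fin C) := Finset.univ.filter (fun i : Fin C => ¬ (i : ℕ) < M) with hK
  have hi0top : i0 ∈ topF := by simp [htopF, hi0def]; omega
  have hi0K : i0 ∉ K := by simp [hK, hi0def]; omega
  have hKne : K.Nonempty := ⟨⟨M, by omega⟩, by simp [hK]⟩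
  -- sum decomposition
  have hdecomp : ∀ (g : ℝ → ℝ) (x : ℝ),
      (∑ i ∈ topF, g (Function.update z i0 x i)) = g x + ∑ i ∈ topF.erase i0, g (z i) ∧
      (∑ j, g (Function.update z i0 x j))
        = g x + ((∑ i ∈ topF.erase i0, g (z i)) + ∑ i ∈ K, g (z i)) := by
    intro g x
    have h1 : (∑ i ∈ topF, g (Function.update z i0 x i))
        = g x + ∑ i ∈ topF.erase i0, g (z i) := by
      rw [← Finset.add_sum_erase _ _ hi0top, Function.update_self]
      congr 1
      refine Finset.sum_congr rfl (fun j hj => ?_)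
      rw [Function.update_of_ne (Finset.ne_of_mem_erase hj)]
    have h2 : (∑ i ∈ K, g (Function.update z i0 x i)) = ∑ i ∈ K, g (z i) := by
      refine Finset.sum_congr rfl (fun j hj => ?_)
      have : j ≠ i0 := by rintro rfl; exact hi0K hj
      rw [Function.update_of_ne this]
    refine ⟨h1, ?_⟩
    rw [← Finset.sum_filter_add_sum_filter_not Finset.univ (fun i : Fin C => (i : ℕ) < M)]
    rw [← htopF, ← hK, h1, h2, add_assoc]
  set A : ℝ := ∑ i ∈ topF.erase i0, Real.exp (z i) with hA
  set D : ℝ := ∑ i ∈ K, Real.exp (z i) with hD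
  set AT : ℝ := ∑ i ∈ topF.erase i0, Real.exp (z i / T) with hAT
  set DT : ℝ := ∑ i ∈ K, Real.exp (z i / T) with hDT
  have hA0 : 0 ≤ A := Finset.sum_nonneg fun i _ => (Real.exp_pos _).le
  have hD0 : 0 < D := Finset.sum_pos (fun i _ => Real.exp_pos _) hKne
  have hAT0 : 0 ≤ AT := Finset.sum_nonneg fun i _ => (Real.exp_pos _).le
  have hDT0 : 0 < DT := Finset.sum_pos (fun i _ => Real.exp_pos _) hKne
  have hgap : ∀ x : ℝ, gap (Function.update z i0 x) T M
      = (Real.exp x + A) / (Real.exp x + (A + D))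
        - (Real.exp (x / T) + AT) / (Real.exp (x / T) + (AT + DT)) := by
    intro x
    unfold gap
    rw [(hdecomp (fun y => Real.exp y) x).1, (hdecomp (fun y => Real.exp y) x).2,
      (hdecomp (fun y => Real.exp (y / T)) x).1, (hdecomp (fun y => Real.exp (y / T)) x).2]
  set S : ℝ := Real.exp x0 + (A + D) with hS
  set ST : ℝ := Real.exp (x0 / T) + (AT + DT) with hST
  have hSpos : 0 < S := by positivity
  have hSTpos : 0 < ST := by positivity
  -- derivatives
  have h1 : HasDerivAt (fun x => (Real.exp x + A) / (Real.exp x + (A + D)))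
      (Real.exp x0 * D / S ^ 2) x0 := by
    have hnum : HasDerivAt (fun x => Real.exp x + A) (Real.exp x0) x0 :=
      (Real.hasDerivAt_exp x0).add_const A
    have hden : HasDerivAt (fun x => Real.exp x + (A + D)) (Real.exp x0) x0 :=
      (Real.hasDerivAt_exp x0).add_const (A + D)
    have := hnum.div hden (ne_of_gt hSpos)
    exact this.congr_deriv (by
    rw [hS]
    ring)
  have h2 : HasDerivAt (fun x => (Real.exp (x / T) + AT) / (Real.exp (x / T) + (AT + DT)))
      (Real.exp (x0 / T) * (1 / T) * DT / ST ^ 2) x0 := by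
    have hin : HasDerivAt (fun x : ℝ => x / T) (1 / T) x0 := by
      simpa using (hasDerivAt_id x0).div_const T
    have hexp : HasDerivAt (fun x => Real.exp (x / T)) (Real.exp (x0 / T) * (1 / T)) x0 :=
      hin.exp
    have hnum : HasDerivAt (fun x => Real.exp (x / T) + AT)
        (Real.exp (x0 / T) * (1 / T)) x0 := hexp.add_const AT
    have hden : HasDerivAt (fun x => Real.exp (x / T) + (AT + DT))
        (Real.exp (x0 / T) * (1 / T)) x0 := hexp.add_const (AT + DT)
    have := hnum.div hden (ne_of_gt hSTpos)
    exact this.congr_deriv (by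
    rw [hST]
    ring)
  have hfun : (fun x => gap (Function.update z i0 x) T M)
      = fun x => (Real.exp x + A) / (Real.exp x + (A + D))
        - (Real.exp (x / T) + AT) / (Real.exp (x / T) + (AT + DT)) := funext hgap
  show deriv (fun x => gap (Function.update z i0 x) T M) x0 < 0
  rw [hfun, deriv_fun_sub h1.differentiableAt h2.differentiableAt, h1.deriv, h2.deriv, sub_neg]
  -- key scalar inequality
  set u : ℝ := ((C:ℝ) - 1) * Real.exp (-Δ / T) with hu
  have hu0 : 0 < u := by positivity
  have hkey : T * (1 + u) ^ 2 < Real.exp (Δ * (T - 1) / T) := by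
    rcases le_or_gt u 1 with hcase | hcase
    · have h4T : 4 * T < Real.exp (Δ * (T - 1) / T) := by
        have hlt : Real.log (4 * T) < Δ * (T - 1) / T := by
          have := mul_lt_mul_of_pos_right hmax1 (show (0:ℝ) < (T - 1) / T by positivity)
          calc Real.log (4 * T) = T / (T - 1) * Real.log (4 * T) * ((T - 1) / T) := by
                field_simp
            _ < Δ * ((T - 1) / T) := this
            _ = Δ * (T - 1) / T := by ring
        have := Real.exp_lt_exp.mpr hlt
        rwa [Real.exp_log (by positivity)] at this
      nlinarith [hu0.le, hcase, hT0.le, mul_le_mul_of_nonneg_left (show (1+u)^2 ≤ 4 by nlinarith) hT0.le]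
    · have h4T : 4 * T * ((C:ℝ) - 1) ^ 2 < Real.exp (Δ * (T + 1) / T) := by
        have hlt : Real.log (4 * T * ((C:ℝ) - 1) ^ 2) < Δ * (T + 1) / T := by
          have hTp1 : (0:ℝ) < (T + 1) / T := by positivity
          have := mul_lt_mul_of_pos_right hmax2 hTp1
          calc Real.log (4 * T * ((C:ℝ) - 1) ^ 2)
              = T / (T + 1) * Real.log (4 * T * ((C:ℝ) - 1) ^ 2) * ((T + 1) / T) := by
                field_simp
            _ < Δ * ((T + 1) / T) := this
            _ = Δ * (T + 1) / T := by ring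
        have := Real.exp_lt_exp.mpr hlt
        rwa [Real.exp_log (by positivity)] at this
      have hub : T * (1 + u) ^ 2 ≤ 4 * T * ((C:ℝ) - 1) ^ 2 * Real.exp (-2 * Δ / T) := by
        have hu2 : u ^ 2 = ((C:ℝ) - 1) ^ 2 * Real.exp (-2 * Δ / T) := by
          rw [hu, mul_pow, sq (Real.exp (-Δ / T)), ← Real.exp_add]
          ring_nf
        nlinarith [sq_nonneg (1 - u)]
      calc T * (1 + u) ^ 2 ≤ 4 * T * ((C:ℝ) - 1) ^ 2 * Real.exp (-2 * Δ / T) := hub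
        _ < Real.exp (Δ * (T + 1) / T) * Real.exp (-2 * Δ / T) :=
            mul_lt_mul_of_pos_right h4T (Real.exp_pos _)
        _ = Real.exp (Δ * (T - 1) / T) := by
            rw [← Real.exp_add]; congr 1; field_simp; ring
  -- bound on ST
  have hSTle : ST ≤ Real.exp (x0 / T) * (1 + u) := by
    have hrest : AT + DT = ∑ j ∈ Finset.univ.erase i0, Real.exp (z j / T) := by
      have e1 := (hdecomp (fun y => Real.exp (y / T)) x0).2
      rw [Function.update_eq_self] at e1
      have e2 : (∑ j, Real.exp (z j / T))
          = Real.exp (z i0 / T) + ∑ j ∈ Finset.univ.erase i0, Real.exp (z j / T) := by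
        exact (Finset.add_sum_erase _ (fun j => Real.exp (z j / T)) (Finset.mem_univ i0)).symm
      rw [e2] at e1
      exact (add_left_cancel e1).symm
    have hbound : ∀ j ∈ Finset.univ.erase i0, Real.exp (z j / T) ≤ Real.exp (z1 / T) := by
      intro j hj
      have hj0 : j ≠ i0 := Finset.ne_of_mem_erase hj
      have hj1 : (1:ℕ) ≤ (j : ℕ) := by
        rcases Nat.eq_zero_or_pos (j : ℕ) with h | h
        · exact absurd (Fin.ext h) hj0
        · exact h
      have : z j ≤ z1 := hz i1 j (by rw [Fin.le_def]; simpa [hi1def] using hj1)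
      exact Real.exp_le_exp.mpr (by gcongr)
    have hcard : (Finset.univ.erase i0).card = C - 1 := by
      rw [Finset.card_erase_of_mem (Finset.mem_univ i0), Finset.card_univ, Fintype.card_fin]
    have hsum : AT + DT ≤ ((C:ℝ) - 1) * Real.exp (z1 / T) := by
      rw [hrest]
      calc (∑ j ∈ Finset.univ.erase i0, Real.exp (z j / T))
          ≤ (Finset.univ.erase i0).card • Real.exp (z1 / T) :=
            Finset.sum_le_card_nsmul _ _ _ hbound
        _ = ((C - 1 : ℕ) : ℝ) * Real.exp (z1 / T) := by rw [hcard, nsmul_eq_mul]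
        _ = ((C:ℝ) - 1) * Real.exp (z1 / T) := by
            congr 1; push_cast [Nat.cast_sub (by omega : 1 ≤ C)]; ring
    have hz1T : Real.exp (z1 / T) = Real.exp (x0 / T) * Real.exp (-Δ / T) := by
      rw [← Real.exp_add]; congr 1; rw [hΔdef]; ring
    calc ST = Real.exp (x0 / T) + (AT + DT) := hST
      _ ≤ Real.exp (x0 / T) + ((C:ℝ) - 1) * Real.exp (z1 / T) := by linarith
      _ = Real.exp (x0 / T) * (1 + u) := by rw [hz1T, hu]; ring
  -- per-term inequality and conclusion
  have hterm : ∀ i ∈ K, Real.exp x0 * Real.exp (z i) / S ^ 2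
      < Real.exp (x0 / T) * (1 / T) * Real.exp (z i / T) / ST ^ 2 := by
    intro i hi
    have hMi : M ≤ (i : ℕ) := by
      have := (Finset.mem_filter.mp hi).2
      omega
    have hzi : z i ≤ z1 := hz i1 i (by rw [Fin.le_def]; simp [hi1def]; omega)
    have hw : Δ ≤ x0 - z i := by rw [hΔdef]; linarith
    have hwpos : 0 < x0 - z i := lt_of_lt_of_le hΔpos hw
    have st1 : Real.exp x0 * Real.exp (z i) / S ^ 2
        ≤ Real.exp x0 * Real.exp (z i) / (Real.exp x0) ^ 2 := by
      have hSe : (Real.exp x0) ^ 2 ≤ S ^ 2 := by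
        have hxS : Real.exp x0 ≤ S := by rw [hS]; linarith
        exact pow_le_pow_left₀ (Real.exp_pos x0).le hxS 2
      exact div_le_div_of_nonneg_left (by positivity) (by positivity) hSe
    have st2 : Real.exp x0 * Real.exp (z i) / (Real.exp x0) ^ 2
        = Real.exp (-(x0 - z i)) := by
      rw [sq, ← Real.exp_add, ← Real.exp_add, ← Real.exp_sub]
      congr 1; ring
    have st3 : Real.exp (-(x0 - z i))
        < Real.exp (-(x0 - z i) / T) / (T * (1 + u) ^ 2) := by
      rw [lt_div_iff₀ (by positivity)]
      have hk2 : T * (1 + u) ^ 2 < Real.exp ((x0 - z i) * (T - 1) / T) :=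
        lt_of_lt_of_le hkey (Real.exp_le_exp.mpr (by
          exact div_le_div_of_nonneg_right
            (mul_le_mul_of_nonneg_right hw hT1.le) hT0.le))
      calc Real.exp (-(x0 - z i)) * (T * (1 + u) ^ 2)
          < Real.exp (-(x0 - z i)) * Real.exp ((x0 - z i) * (T - 1) / T) :=
            mul_lt_mul_of_pos_left hk2 (Real.exp_pos _)
        _ = Real.exp (-(x0 - z i) / T) := by
            rw [← Real.exp_add]; congr 1; field_simp; ring
    have st4 : Real.exp (-(x0 - z i) / T) / (T * (1 + u) ^ 2)
        ≤ Real.exp (x0 / T) * (1 / T) * Real.exp (z i / T) / ST ^ 2 := by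
      have hST2 : ST ^ 2 ≤ (Real.exp (x0 / T) * (1 + u)) ^ 2 := by
        apply pow_le_pow_left₀ hSTpos.le hSTle
      have heq : Real.exp (-(x0 - z i) / T) / (T * (1 + u) ^ 2)
          = Real.exp (x0 / T) * (1 / T) * Real.exp (z i / T)
            / (Real.exp (x0 / T) * (1 + u)) ^ 2 := by
        have hexps : Real.exp (-(x0 - z i) / T)
            = Real.exp (z i / T) / Real.exp (x0 / T) := by
          rw [← Real.exp_sub]; congr 1; ring
        rw [hexps]
        have h1u : (0:ℝ) < 1 + u := by linarith
        field_simp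
      rw [heq]
      exact div_le_div_of_nonneg_left (by positivity) (by positivity) hST2
    calc Real.exp x0 * Real.exp (z i) / S ^ 2
        ≤ Real.exp (-(x0 - z i)) := st2 ▸ st1
      _ < Real.exp (-(x0 - z i) / T) / (T * (1 + u) ^ 2) := st3
      _ ≤ Real.exp (x0 / T) * (1 / T) * Real.exp (z i / T) / ST ^ 2 := st4
  calc Real.exp x0 * D / S ^ 2
      = ∑ i ∈ K, Real.exp x0 * Real.exp (z i) / S ^ 2 := by
        rw [hD, Finset.mul_sum, Finset.sum_div]
    _ < ∑ i ∈ K, Real.exp (x0 / T) * (1 / T) * Real.exp (z i / T) / ST ^ 2 :=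
        Finset.sum_lt_sum_of_nonempty hKne hterm
    _ = Real.exp (x0 / T) * (1 / T) * DT / ST ^ 2 := by
        rw [hDT, Finset.mul_sum, Finset.sum_div]
end

section
/- Let $\mathbf{z}\in\mathbb{R}^C$ be sorted descendingly, $T > 1$, and define $d(\mathbf{z};T,i) = \frac{e^{z_i}}{\sum_j e^{z_j}} - \frac{e^{z_i/T}}{\sum_j e^{z_j/T}}$. If there exists $i$ with $d(\mathbf{z};T,i) < 0$, then $d(\mathbf{z};T,k) < 0$ for every $k > i$. -/
noncomputable def dfun {C : ℕ} (z : Fin C → ℝ) (T : ℝ) (i : Fin C) : ℝ :=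
  Real.exp (z i) / (∑ j, Real.exp (z j)) - Real.exp (z i / T) / (∑ j, Real.exp (z j / T))

theorem stmt_12 {C : ℕ} (z : Fin C → ℝ) (hz : ∀ i j : Fin C, i ≤ j → z j ≤ z i)
    (T : ℝ) (hT : 1 < T) (i : Fin C) (hi : dfun z T i < 0) :
    ∀ k : Fin C, i < k → dfun z T k < 0 := by
  intro k hk
  have hb : z k ≤ z i := hz i k hk.le
  have hT0 : 0 < T := by linarith
  have h1T : 1 / T < 1 := by rw [div_lt_one hT0]; exact hT
  have hS : 0 < ∑ j, Real.exp (z j) :=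
    Finset.sum_pos (fun j _ => Real.exp_pos _) ⟨i, Finset.mem_univ i⟩
  have hST : 0 < ∑ j, Real.exp (z j / T) :=
    Finset.sum_pos (fun j _ => Real.exp_pos _) ⟨i, Finset.mem_univ i⟩
  unfold dfun at hi ⊢
  rw [sub_neg, div_lt_div_iff₀ hS hST] at hi ⊢
  have h1 : Real.exp (z k) * (∑ j, Real.exp (z j / T)) <
      Real.exp (z k - z i) * (Real.exp (z i / T) * (∑ j, Real.exp (z j))) := by
    have := mul_lt_mul_of_pos_left hi (Real.exp_pos (z k - z i))
    rwa [← mul_assoc, ← Real.exp_add, sub_add_cancel] at this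
  have h2 : Real.exp (z k - z i) * Real.exp (z i / T) ≤ Real.exp (z k / T) := by
    rw [← Real.exp_add, Real.exp_le_exp]
    rw [div_eq_mul_inv, div_eq_mul_inv]
    nlinarith [mul_nonneg (sub_nonneg.2 hb) (sub_nonneg.2 h1T.le),
      (div_eq_mul_inv (1:ℝ) T).symm, one_div T]
  calc Real.exp (z k) * (∑ j, Real.exp (z j / T))
      < Real.exp (z k - z i) * (Real.exp (z i / T) * (∑ j, Real.exp (z j))) := h1
    _ = (Real.exp (z k - z i) * Real.exp (z i / T)) * (∑ j, Real.exp (z j)) := by ring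
    _ ≤ Real.exp (z k / T) * (∑ j, Real.exp (z j)) :=
        mul_le_mul_of_nonneg_right h2 hS.le
end

section
/- Let $\mathbf{z}\in\mathbb{R}^C$ be sorted descendingly, $0 < T < 1$, and $d(\mathbf{z};T,i) = \frac{e^{z_i}}{\sum_j e^{z_j}} - \frac{e^{z_i/T}}{\sum_j e^{z_j/T}}$. If there exists $i$ with $d(\mathbf{z};T,i) > 0$, then $d(\mathbf{z};T,k) > 0$ for every $k > i$. -/
theorem stmt_13 {C : ℕ} (z : Fin C → ℝ) (hz : ∀ i j : Fin C, i ≤ j → z j ≤ z i)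
    (T : ℝ) (hT0 : 0 < T) (hT1 : T < 1) (i : Fin C) (hi : dfun z T i > 0) :
    ∀ k : Fin C, i < k → dfun z T k > 0 := by
  intro k hk
  unfold dfun at hi ⊢
  have hS1 : 0 < ∑ j, Real.exp (z j) :=
    Finset.sum_pos (fun j _ => Real.exp_pos _) ⟨i, Finset.mem_univ i⟩
  have hST : 0 < ∑ j, Real.exp (z j / T) :=
    Finset.sum_pos (fun j _ => Real.exp_pos _) ⟨i, Finset.mem_univ i⟩
  have hi' : Real.exp (z i / T) * (∑ j, Real.exp (z j)) <
      Real.exp (z i) * (∑ j, Real.exp (z j / T)) := by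
    have h := sub_pos.mp hi
    rwa [div_lt_div_iff₀ hST hS1] at h
  have hzk : z k ≤ z i := hz i k hk.le
  have hle : z k / T - z i / T + z i ≤ z k := by
    have h1 : (z k - z i) / T ≤ z k - z i := by
      rw [div_le_iff₀ hT0]
      nlinarith [sub_nonpos.mpr hzk]
    have : z k / T - z i / T = (z k - z i) / T := by ring
    linarith [this ▸ h1]
  have r := Real.exp_pos (z k / T - z i / T)
  have h2 := mul_lt_mul_of_pos_left hi' r
  have e1 : Real.exp (z k / T - z i / T) * Real.exp (z i / T) = Real.exp (z k / T) := by
    rw [← Real.exp_add]; ring_nf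
  have e2 : Real.exp (z k / T - z i / T) * Real.exp (z i) ≤ Real.exp (z k) := by
    rw [← Real.exp_add]; exact Real.exp_le_exp.mpr hle
  have key : Real.exp (z k / T) * (∑ j, Real.exp (z j)) <
      Real.exp (z k) * (∑ j, Real.exp (z j / T)) := by
    calc Real.exp (z k / T) * (∑ j, Real.exp (z j))
        = Real.exp (z k / T - z i / T) * (Real.exp (z i / T) * (∑ j, Real.exp (z j))) := by
          rw [← mul_assoc, e1]
      _ < Real.exp (z k / T - z i / T) * (Real.exp (z i) * (∑ j, Real.exp (z j / T))) := h2
      _ ≤ Real.exp (z k) * (∑ j, Real.exp (z j / T)) := by nlinarith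
  rw [gt_iff_lt, sub_pos, div_lt_div_iff₀ hST hS1]
  exact key
end

section
/- Let $\mathbf{z}\in\mathbb{R}^C$ be sorted descendingly, $T > 1$, and $\Delta z = z_1 - z_2$. If the first coordinate is the only one whose softmax value decreases under temperature scaling (i.e., $d(\mathbf{z};T,1) > 0$ and $d(\mathbf{z};T,i) \leq 0$ for all $i \geq 2$, where $d(\mathbf{z};T,i) = \frac{e^{z_i}}{\sum_j e^{z_j}} - \frac{e^{z_i/T}}{\sum_j e^{z_j/T}}$), then for all $M, L \in \{1,\dots,C\}$: $|g(\mathbf{z};T,M) - g(\mathbf{z};T,L)| < \frac{(C-1)e^{-\Delta z/T}}{(C-1)e^{-\Delta z/T}+1}$, where $g(\mathbf{z};T,M) = \sum_{i=1}^M d(\mathbf{z};T,i)$. -/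
noncomputable def gsum {C : ℕ} (z : Fin C → ℝ) (T : ℝ) (M : ℕ) : ℝ :=
  ∑ i ∈ Finset.univ.filter (fun i : Fin C => (i : ℕ) < M), dfun z T i

theorem stmt_15 {C : ℕ} (hC : 2 ≤ C) (z : Fin C → ℝ)
    (hz : ∀ i j : Fin C, i ≤ j → z j ≤ z i)
    (T : ℝ) (hT : 1 < T)
    (h1 : dfun z T ⟨0, by omega⟩ > 0)
    (h2 : ∀ i : Fin C, 1 ≤ (i : ℕ) → dfun z T i ≤ 0) :
    ∀ M L : ℕ, 1 ≤ M → M ≤ C → 1 ≤ L → L ≤ C →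
      |gsum z T M - gsum z T L| <
        ((C : ℝ) - 1) * Real.exp (-(z ⟨0, by omega⟩ - z ⟨1, by omega⟩) / T) /
          (((C : ℝ) - 1) * Real.exp (-(z ⟨0, by omega⟩ - z ⟨1, by omega⟩) / T) + 1) := by
  intro M L hM1 hMC hL1 hLC
  have hT0 : 0 < T := by linarith
  set i0 : Fin C := ⟨0, by omega⟩ with hi0
  set i1 : Fin C := ⟨1, by omega⟩ with hi1
  have hS1 : 0 < ∑ j, Real.exp (z j) :=
    Finset.sum_pos (fun j _ => Real.exp_pos _) ⟨i0, Finset.mem_univ _⟩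
  have hST : 0 < ∑ j, Real.exp (z j / T) :=
    Finset.sum_pos (fun j _ => Real.exp_pos _) ⟨i0, Finset.mem_univ _⟩
  have hsum : ∑ i, dfun z T i = 0 := by
    simp only [dfun]
    rw [Finset.sum_sub_distrib, ← Finset.sum_div, ← Finset.sum_div,
        div_self hS1.ne', div_self hST.ne', sub_self]
  have key : ∀ N, 1 ≤ N → N ≤ C → 0 ≤ gsum z T N ∧ gsum z T N ≤ dfun z T i0 := by
    intro N hN1 hNC
    constructor
    · have hsplit := Finset.sum_filter_add_sum_filter_not Finset.univ
        (fun i : Fin C => (i : ℕ) < N) (dfun z T)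
      rw [hsum] at hsplit
      have hrest : ∑ i ∈ Finset.univ.filter (fun i : Fin C => ¬ (i : ℕ) < N),
          dfun z T i ≤ 0 := by
        apply Finset.sum_nonpos
        intro i hi
        simp only [Finset.mem_filter] at hi
        exact h2 i (by omega)
      unfold gsum
      linarith
    · have h0mem : i0 ∈ Finset.univ.filter (fun i : Fin C => (i : ℕ) < N) := by
        simp [hi0]; omega
      rw [gsum, ← Finset.add_sum_erase _ _ h0mem]
      have hrest : ∑ i ∈ (Finset.univ.filter (fun i : Fin C => (i : ℕ) < N)).erase i0,
          dfun z T i ≤ 0 := by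
        apply Finset.sum_nonpos
        intro i hi
        have hi' := Finset.mem_erase.mp hi
        have : (i : ℕ) ≠ 0 := fun h => hi'.1 (Fin.ext h)
        exact h2 i (by omega)
      linarith
  have hbM := key M hM1 hMC
  have hbL := key L hL1 hLC
  have habs : |gsum z T M - gsum z T L| ≤ dfun z T i0 := by
    rw [abs_sub_le_iff]
    constructor <;> linarith [hbM.1, hbM.2, hbL.1, hbL.2]
  set a : ℝ := Real.exp (-(z i0 - z i1) / T) with ha
  set K : ℝ := (C : ℝ) - 1 with hK
  have hK1 : (1 : ℝ) ≤ K := by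
    rw [hK]
    have : (2 : ℝ) ≤ (C : ℝ) := by exact_mod_cast hC
    linarith
  have ha0 : 0 < a := Real.exp_pos _
  have hden : 0 < K * a + 1 := by positivity
  -- step A: exp(z i0)/S1 < 1
  have hA : Real.exp (z i0) < ∑ j, Real.exp (z j) := by
    have h10 : i1 ≠ i0 := by simp [hi0, hi1, Fin.ext_iff]
    exact Finset.single_lt_sum h10 (Finset.mem_univ _) (Finset.mem_univ _)
      (Real.exp_pos _) (fun k _ _ => (Real.exp_pos _).le)
  -- step B: ST ≤ exp(z i0/T) + K * exp(z i1/T)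
  have hB : (∑ j, Real.exp (z j / T)) ≤ Real.exp (z i0 / T) + K * Real.exp (z i1 / T) := by
    rw [← Finset.add_sum_erase _ _ (Finset.mem_univ i0)]
    have hcard : (Finset.univ.erase i0).card = C - 1 := by
      rw [Finset.card_erase_of_mem (Finset.mem_univ _), Finset.card_univ, Fintype.card_fin]
    have hterm : ∀ i ∈ Finset.univ.erase i0, Real.exp (z i / T) ≤ Real.exp (z i1 / T) := by
      intro i hi
      have hi' := Finset.mem_erase.mp hi
      have h1i : i1 ≤ i := by
        have : (i : ℕ) ≠ 0 := fun h => hi'.1 (Fin.ext h)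
        exact Fin.mk_le_of_le_val (by omega)
      have := hz i1 i h1i
      exact Real.exp_le_exp.mpr (div_le_div_of_nonneg_right this hT0.le |>.trans_eq rfl)
    have := Finset.sum_le_card_nsmul _ _ _ hterm
    rw [hcard, nsmul_eq_mul] at this
    have hcast : ((C - 1 : ℕ) : ℝ) = K := by
      rw [hK]; push_cast [Nat.cast_sub (by omega : 1 ≤ C)]; ring
    rw [hcast] at this
    linarith
  -- step C: 1/(K*a+1) ≤ exp(z i0/T)/ST
  have hCC : 1 / (K * a + 1) ≤ Real.exp (z i0 / T) / (∑ j, Real.exp (z j / T)) := by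
    rw [div_le_div_iff₀ hden hST]
    have hexp : Real.exp (z i0 / T) * a = Real.exp (z i1 / T) := by
      rw [ha, ← Real.exp_add]
      congr 1
      field_simp
      ring
    calc (1 : ℝ) * (∑ j, Real.exp (z j / T)) = ∑ j, Real.exp (z j / T) := one_mul _
      _ ≤ Real.exp (z i0 / T) + K * Real.exp (z i1 / T) := hB
      _ = Real.exp (z i0 / T) * (K * a + 1) := by rw [← hexp]; ring
  -- final bound on dfun z T i0
  have hd0 : dfun z T i0 < K * a / (K * a + 1) := by
    have heq : K * a / (K * a + 1) = 1 - 1 / (K * a + 1) := by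
      field_simp
      ring
    rw [heq, dfun]
    have hlt : Real.exp (z i0) / (∑ j, Real.exp (z j)) < 1 :=
      (div_lt_one hS1).mpr hA
    linarith
  exact lt_of_le_of_lt habs hd0
end
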